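/- For every n ≥ 1 and every 0 ≤ m ≤ n there is a constant c > 0 such that for every continuously differentiable path γ = (x, y) : [0,1] → ℝⁿ × ℝⁿ whose two endpoints γ(0) and γ(1) each lie in L₀ ∪ L₁, one has |∫₀¹ ⟨x(t), y′(t)⟩ dt| ≤ c·(∫₀¹ ‖γ′(t)‖ dt)². -/

import Mathlib

/-- ℝⁿ × ℝⁿ with the Euclidean (L²) norm. -/
noncomputable abbrev E2 (n : ℕ) :=
  WithLp 2 (EuclideanSpace ℝ (Fin n) × EuclideanSpace ℝ (Fin n))

/-- The Lagrangian subspace `L₀ = {(x, y) : x = 0}`. -/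
def L0 (n : ℕ) : Set (E2 n) :=
  {p | (WithLp.equiv 2 _ p).1 = 0}

/-- The Lagrangian subspace `L₁ = {(x, y) : xⱼ = 0 for 1 ≤ j ≤ m, yⱼ = 0 for m < j ≤ n}`. -/
def L1 (n m : ℕ) : Set (E2 n) :=
  {p | (∀ j : Fin n, (j : ℕ) < m → (WithLp.equiv 2 _ p).1 j = 0) ∧
       (∀ j : Fin n, m ≤ (j : ℕ) → (WithLp.equiv 2 _ p).2 j = 0)}

open Set MeasureTheory intervalIntegral

section Helpers

variable {F : Type*} [NormedAddCommGroup F] [NormedSpace ℝ F] [CompleteSpace F]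

/-- Fundamental theorem of calculus on a subinterval of `[0,1]` for one-sided derivatives. -/
lemma ftc_icc {f f' : ℝ → F}
    (hd : ∀ t ∈ Icc (0:ℝ) 1, HasDerivWithinAt f (f' t) (Icc 0 1) t)
    (hc : ContinuousOn f' (Icc 0 1)) {a b : ℝ} (ha : a ∈ Icc (0:ℝ) 1)
    (hb : b ∈ Icc (0:ℝ) 1) (hab : a ≤ b) :
    ∫ t in a..b, f' t = f b - f a := by
  have hsub : Icc a b ⊆ Icc (0:ℝ) 1 := Icc_subset_Icc ha.1 hb.2
  refine integral_eq_sub_of_hasDeriv_right_of_le hab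
    (fun t ht => ((hd t (hsub ht)).continuousWithinAt).mono hsub) ?_ ?_
  · intro x hx
    have hx' : x ∈ Icc (0:ℝ) 1 := hsub (Ioo_subset_Icc_self hx)
    exact (hd x hx').mono_of_mem_nhdsWithin
      (Icc_mem_nhdsGT_of_mem ⟨hx'.1, lt_of_lt_of_le hx.2 hb.2⟩)
  · exact (hc.mono hsub).intervalIntegrable_of_Icc hab

/-- If a path starts or ends at `0` and its derivative is dominated by `g`,
then it stays within `∫ g` of the origin. -/
lemma norm_le_length {f f' : ℝ → F} {g : ℝ → ℝ}
    (hd : ∀ t ∈ Icc (0:ℝ) 1, HasDerivWithinAt f (f' t) (Icc 0 1) t)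
    (hc : ContinuousOn f' (Icc 0 1)) (hg : ContinuousOn g (Icc 0 1))
    (hle : ∀ t ∈ Icc (0:ℝ) 1, ‖f' t‖ ≤ g t)
    (h0 : f 0 = 0 ∨ f 1 = 0) {t : ℝ} (ht : t ∈ Icc (0:ℝ) 1) :
    ‖f t‖ ≤ ∫ s in (0:ℝ)..1, g s := by
  have key : ∀ a b : ℝ, a ∈ Icc (0:ℝ) 1 → b ∈ Icc (0:ℝ) 1 → a ≤ b →
      ‖f b - f a‖ ≤ ∫ s in (0:ℝ)..1, g s := by
    intro a b ha hb hab
    have hsub : Icc a b ⊆ Icc (0:ℝ) 1 := Icc_subset_Icc ha.1 hb.2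
    have h1 : ‖f b - f a‖ ≤ ∫ s in a..b, ‖f' s‖ := by
      rw [← ftc_icc hd hc ha hb hab]
      exact norm_integral_le_integral_norm hab
    have h2 : (∫ s in a..b, ‖f' s‖) ≤ ∫ s in a..b, g s :=
      integral_mono_on hab ((hc.mono hsub).norm.intervalIntegrable_of_Icc hab)
        ((hg.mono hsub).intervalIntegrable_of_Icc hab)
        (fun s hs => hle s (hsub hs))
    have h3 : (∫ s in a..b, g s) ≤ ∫ s in (0:ℝ)..1, g s :=
      integral_mono_interval ha.1 hab hb.2
        ((ae_restrict_iff' measurableSet_Ioc).2 (ae_of_all _ fun s hs =>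
          le_trans (norm_nonneg (f' s)) (hle s ⟨le_of_lt hs.1, hs.2⟩)))
        (hg.intervalIntegrable_of_Icc zero_le_one)
    linarith
  rcases h0 with h0 | h0
  · simpa [h0] using key 0 t (by norm_num) ht ht.1
  · have := key t 1 ht (by norm_num) ht.2
    rwa [h0, zero_sub, norm_neg] at this

end Helpers

/-- Projection of `ℝⁿ` onto the coordinates `j < m`. -/
noncomputable def projP (n m : ℕ) :
    EuclideanSpace ℝ (Fin n) →L[ℝ] EuclideanSpace ℝ (Fin n) :=
  LinearMap.toContinuousLinearMap
    { toFun := fun z => (WithLp.toLp 2 (fun j => if (j : ℕ) < m then z j else 0) : EuclideanSpace ℝ (Fin n))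
      map_add' := by
        intro z w; ext j
        by_cases h : (j : ℕ) < m <;> simp [h, PiLp.add_apply]
      map_smul' := by
        intro c z; ext j
        by_cases h : (j : ℕ) < m <;> simp [h, PiLp.smul_apply] }

/-- Projection of `ℝⁿ` onto the coordinates `j ≥ m`. -/
noncomputable def projQ (n m : ℕ) :
    EuclideanSpace ℝ (Fin n) →L[ℝ] EuclideanSpace ℝ (Fin n) :=
  LinearMap.toContinuousLinearMap
    { toFun := fun z => (WithLp.toLp 2 (fun j => if (j : ℕ) < m then 0 else z j) : EuclideanSpace ℝ (Fin n))
      map_add' := by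
        intro z w; ext j
        by_cases h : (j : ℕ) < m <;> simp [h, PiLp.add_apply]
      map_smul' := by
        intro c z; ext j
        by_cases h : (j : ℕ) < m <;> simp [h, PiLp.smul_apply] }

@[simp] lemma projP_apply (n m : ℕ) (z : EuclideanSpace ℝ (Fin n)) (j : Fin n) :
    projP n m z j = if (j : ℕ) < m then z j else 0 := rfl

@[simp] lemma projQ_apply (n m : ℕ) (z : EuclideanSpace ℝ (Fin n)) (j : Fin n) :
    projQ n m z j = if (j : ℕ) < m then 0 else z j := rfl

lemma projP_norm_le (n m : ℕ) (z : EuclideanSpace ℝ (Fin n)) : ‖projP n m z‖ ≤ ‖z‖ := by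
  rw [EuclideanSpace.norm_eq, EuclideanSpace.norm_eq]
  apply Real.sqrt_le_sqrt
  apply Finset.sum_le_sum
  intro j _
  by_cases h : (j : ℕ) < m <;> simp [h] <;> positivity

lemma projQ_norm_le (n m : ℕ) (z : EuclideanSpace ℝ (Fin n)) : ‖projQ n m z‖ ≤ ‖z‖ := by
  rw [EuclideanSpace.norm_eq, EuclideanSpace.norm_eq]
  apply Real.sqrt_le_sqrt
  apply Finset.sum_le_sum
  intro j _
  by_cases h : (j : ℕ) < m <;> simp [h] <;> positivity

lemma inner_split (n m : ℕ) (z w : EuclideanSpace ℝ (Fin n)) :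
    (inner ℝ z w : ℝ) = inner ℝ (projP n m z) w + inner ℝ (projQ n m z) (projQ n m w) := by
  simp only [PiLp.inner_apply, RCLike.inner_apply, conj_trivial, projP_apply, projQ_apply,
    ← Finset.sum_add_distrib]
  apply Finset.sum_congr rfl
  intro j _
  by_cases h : (j : ℕ) < m <;> simp [h]

/-- The first Euclidean coordinate of `E2 n`, as a continuous linear map. -/
noncomputable def XcD (n : ℕ) : E2 n →L[ℝ] EuclideanSpace ℝ (Fin n) :=
  (ContinuousLinearMap.fst ℝ _ _).comp
    (WithLp.prodContinuousLinearEquiv 2 ℝ _ _).toContinuousLinearMap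

/-- The second Euclidean coordinate of `E2 n`, as a continuous linear map. -/
noncomputable def YcD (n : ℕ) : E2 n →L[ℝ] EuclideanSpace ℝ (Fin n) :=
  (ContinuousLinearMap.snd ℝ _ _).comp
    (WithLp.prodContinuousLinearEquiv 2 ℝ _ _).toContinuousLinearMap

lemma XcD_norm_le (n : ℕ) (p : E2 n) : ‖XcD n p‖ ≤ ‖p‖ := by
  have h := WithLp.prod_norm_sq_eq_of_L2 p
  have h2 : ‖XcD n p‖ ^ 2 ≤ ‖p‖ ^ 2 := by
    have he : XcD n p = p.fst := rfl
    rw [he, h]; nlinarith [sq_nonneg ‖p.snd‖]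
  exact le_of_pow_le_pow_left₀ two_ne_zero (norm_nonneg _) h2

lemma YcD_norm_le (n : ℕ) (p : E2 n) : ‖YcD n p‖ ≤ ‖p‖ := by
  have h := WithLp.prod_norm_sq_eq_of_L2 p
  have h2 : ‖YcD n p‖ ^ 2 ≤ ‖p‖ ^ 2 := by
    have he : YcD n p = p.snd := rfl
    rw [he, h]; nlinarith [sq_nonneg ‖p.fst‖]
  exact le_of_pow_le_pow_left₀ two_ne_zero (norm_nonneg _) h2

set_option synthInstance.maxHeartbeats 400000
set_option maxHeartbeats 4000000

set_option maxHeartbeats 1000000 in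
/-- Isoperimetric inequality for C¹ paths with endpoints on `L₀ ∪ L₁`:
the symplectic action `∫ ⟨x, y'⟩` is bounded by a constant (depending only on `n`, `m`)
times the square of the length. -/
theorem path_isoperimetric_inequality (n m : ℕ) (hn : 1 ≤ n) (hm : m ≤ n) :
    ∃ c : ℝ, 0 < c ∧
      ∀ γ γ' : ℝ → E2 n,
        (∀ t ∈ Set.Icc (0:ℝ) 1, HasDerivWithinAt γ (γ' t) (Set.Icc 0 1) t) →
        ContinuousOn γ' (Set.Icc 0 1) →
        γ 0 ∈ L0 n ∪ L1 n m → γ 1 ∈ L0 n ∪ L1 n m →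
        |∫ t in (0:ℝ)..1,
            (inner ℝ ((WithLp.equiv 2 _ (γ t)).1) ((WithLp.equiv 2 _ (γ' t)).2) : ℝ)| ≤
          c * (∫ t in (0:ℝ)..1, ‖γ' t‖) ^ 2 := by
  refine ⟨2, by norm_num, ?_⟩
  intro γ γ' hd hc h0 h1
  set ℓ : ℝ := ∫ t in (0:ℝ)..1, ‖γ' t‖ with hℓdef
  have hℓ0 : 0 ≤ ℓ := integral_nonneg zero_le_one (fun u _ => norm_nonneg _)
  have cγ : ContinuousOn γ (Icc 0 1) := fun t ht => (hd t ht).continuousWithinAt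
  have hgc : ContinuousOn (fun t => ‖γ' t‖) (Icc (0:ℝ) 1) := hc.norm
  -- generic bound: an integrand dominated by `ℓ * ‖γ'‖` integrates to at most `ℓ ^ 2`
  have main_bound : ∀ f : ℝ → ℝ, ContinuousOn f (Icc 0 1) →
      (∀ t ∈ Icc (0:ℝ) 1, |f t| ≤ ℓ * ‖γ' t‖) →
      |∫ t in (0:ℝ)..1, f t| ≤ ℓ ^ 2 := by
    intro f hf hb
    have h1 : |∫ t in (0:ℝ)..1, f t| ≤ ∫ t in (0:ℝ)..1, |f t| :=
      abs_integral_le_integral_abs zero_le_one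
    have h2 : (∫ t in (0:ℝ)..1, |f t|) ≤ ∫ t in (0:ℝ)..1, ℓ * ‖γ' t‖ :=
      integral_mono_on zero_le_one (hf.abs.intervalIntegrable_of_Icc zero_le_one)
        ((continuousOn_const.mul hgc).intervalIntegrable_of_Icc zero_le_one) hb
    have h3 : (∫ t in (0:ℝ)..1, ℓ * ‖γ' t‖) = ℓ * ℓ := by
      rw [intervalIntegral.integral_const_mul]
    rw [pow_two]; linarith
  -- Case A : one of the endpoints lies on `L0`.
  have caseA : XcD n (γ 0) = 0 ∨ XcD n (γ 1) = 0 →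
      |∫ t in (0:ℝ)..1, (inner ℝ (XcD n (γ t)) (YcD n (γ' t)) : ℝ)| ≤ 2 * ℓ ^ 2 := by
    intro hX0
    have hdX : ∀ t ∈ Icc (0:ℝ) 1, HasDerivWithinAt (fun s => XcD n (γ s))
        (XcD n (γ' t)) (Icc 0 1) t :=
      fun t ht => (XcD n).hasFDerivAt.comp_hasDerivWithinAt t (hd t ht)
    have hsup : ∀ t ∈ Icc (0:ℝ) 1, ‖XcD n (γ t)‖ ≤ ℓ :=
      fun t ht => norm_le_length hdX
        ((XcD n).continuous.comp_continuousOn hc) hgc (fun s _ => XcD_norm_le n (γ' s)) hX0 ht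
    have hI := main_bound (fun t => (inner ℝ (XcD n (γ t)) (YcD n (γ' t)) : ℝ))
      (((XcD n).continuous.comp_continuousOn cγ).inner ((YcD n).continuous.comp_continuousOn hc))
      (fun t ht =>
        le_trans (abs_real_inner_le_norm _ _)
          (mul_le_mul (hsup t ht) (YcD_norm_le n (γ' t)) (norm_nonneg _) hℓ0))
    nlinarith [sq_nonneg ℓ]
  -- Case B : both endpoints lie on `L1`.
  have caseB : γ 0 ∈ L1 n m → γ 1 ∈ L1 n m →
      |∫ t in (0:ℝ)..1, (inner ℝ (XcD n (γ t)) (YcD n (γ' t)) : ℝ)| ≤ 2 * ℓ ^ 2 := by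
    intro hL0 hL1
    obtain ⟨hx0, hy0⟩ := hL0
    obtain ⟨hx1, hy1⟩ := hL1
    have hP0 : projP n m (XcD n (γ 0)) = 0 := by
      ext j
      simp only [projP_apply, PiLp.zero_apply]
      split_ifs with h
      · exact hx0 j h
      · rfl
    have hQY0 : projQ n m (YcD n (γ 0)) = 0 := by
      ext j
      simp only [projQ_apply, PiLp.zero_apply]
      split_ifs with h
      · rfl
      · exact hy0 j (not_lt.1 h)
    have hQY1 : projQ n m (YcD n (γ 1)) = 0 := by
      ext j
      simp only [projQ_apply, PiLp.zero_apply]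
      split_ifs with h
      · rfl
      · exact hy1 j (not_lt.1 h)
    -- continuity facts
    have cPX : ContinuousOn (fun s => projP n m (XcD n (γ s))) (Icc (0:ℝ) 1) :=
      (projP n m).continuous.comp_continuousOn ((XcD n).continuous.comp_continuousOn cγ)
    have cQX : ContinuousOn (fun s => projQ n m (XcD n (γ s))) (Icc (0:ℝ) 1) :=
      (projQ n m).continuous.comp_continuousOn ((XcD n).continuous.comp_continuousOn cγ)
    have cQY : ContinuousOn (fun s => projQ n m (YcD n (γ s))) (Icc (0:ℝ) 1) :=
      (projQ n m).continuous.comp_continuousOn ((YcD n).continuous.comp_continuousOn cγ)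
    have cQX' : ContinuousOn (fun s => projQ n m (XcD n (γ' s))) (Icc (0:ℝ) 1) :=
      (projQ n m).continuous.comp_continuousOn ((XcD n).continuous.comp_continuousOn hc)
    have cQY' : ContinuousOn (fun s => projQ n m (YcD n (γ' s))) (Icc (0:ℝ) 1) :=
      (projQ n m).continuous.comp_continuousOn ((YcD n).continuous.comp_continuousOn hc)
    have cY' : ContinuousOn (fun s => YcD n (γ' s)) (Icc (0:ℝ) 1) :=
      (YcD n).continuous.comp_continuousOn hc
    -- derivatives of the projected paths
    have hdPX : ∀ t ∈ Icc (0:ℝ) 1, HasDerivWithinAt (fun s => projP n m (XcD n (γ s)))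
        (projP n m (XcD n (γ' t))) (Icc 0 1) t :=
      fun t ht => ((projP n m).comp (XcD n)).hasFDerivAt.comp_hasDerivWithinAt t (hd t ht)
    have hdQX : ∀ t ∈ Icc (0:ℝ) 1, HasDerivWithinAt (fun s => projQ n m (XcD n (γ s)))
        (projQ n m (XcD n (γ' t))) (Icc 0 1) t :=
      fun t ht => ((projQ n m).comp (XcD n)).hasFDerivAt.comp_hasDerivWithinAt t (hd t ht)
    have hdQY : ∀ t ∈ Icc (0:ℝ) 1, HasDerivWithinAt (fun s => projQ n m (YcD n (γ s)))
        (projQ n m (YcD n (γ' t))) (Icc 0 1) t :=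
      fun t ht => ((projQ n m).comp (YcD n)).hasFDerivAt.comp_hasDerivWithinAt t (hd t ht)
    -- sup bounds
    have hsupP : ∀ t ∈ Icc (0:ℝ) 1, ‖projP n m (XcD n (γ t))‖ ≤ ℓ :=
      fun t ht => norm_le_length hdPX
        ((projP n m).continuous.comp_continuousOn ((XcD n).continuous.comp_continuousOn hc)) hgc
        (fun s _ => le_trans (projP_norm_le n m _) (XcD_norm_le n (γ' s))) (Or.inl hP0) ht
    have hsupQY : ∀ t ∈ Icc (0:ℝ) 1, ‖projQ n m (YcD n (γ t))‖ ≤ ℓ :=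
      fun t ht => norm_le_length hdQY
        ((projQ n m).continuous.comp_continuousOn ((YcD n).continuous.comp_continuousOn hc)) hgc
        (fun s _ => le_trans (projQ_norm_le n m _) (YcD_norm_le n (γ' s))) (Or.inl hQY0) ht
    -- integration by parts for the `Q` part
    have hparts : (∫ t in (0:ℝ)..1,
        ((inner ℝ (projQ n m (XcD n (γ t))) (projQ n m (YcD n (γ' t))) : ℝ) +
          (inner ℝ (projQ n m (XcD n (γ' t))) (projQ n m (YcD n (γ t))) : ℝ))) = 0 := by
      have hdh : ∀ t ∈ Icc (0:ℝ) 1, HasDerivWithinAt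
          (fun s => (inner ℝ (projQ n m (XcD n (γ s))) (projQ n m (YcD n (γ s))) : ℝ))
          ((inner ℝ (projQ n m (XcD n (γ t))) (projQ n m (YcD n (γ' t))) : ℝ) +
            (inner ℝ (projQ n m (XcD n (γ' t))) (projQ n m (YcD n (γ t))) : ℝ)) (Icc 0 1) t :=
        fun t ht => HasDerivWithinAt.inner ℝ (hdQX t ht) (hdQY t ht)
      rw [ftc_icc hdh ((cQX.inner cQY').add (cQX'.inner cQY))
        (by norm_num) (by norm_num) zero_le_one]
      simp [hQY0, hQY1]
    -- integrability of the pieces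
    have intB : IntervalIntegrable
        (fun t => (inner ℝ (projQ n m (XcD n (γ t))) (projQ n m (YcD n (γ' t))) : ℝ)) volume 0 1 :=
      (cQX.inner cQY').intervalIntegrable_of_Icc zero_le_one
    have intC : IntervalIntegrable
        (fun t => (inner ℝ (projQ n m (XcD n (γ' t))) (projQ n m (YcD n (γ t))) : ℝ)) volume 0 1 :=
      (cQX'.inner cQY).intervalIntegrable_of_Icc zero_le_one
    have intA : IntervalIntegrable
        (fun t => (inner ℝ (projP n m (XcD n (γ t))) (YcD n (γ' t)) : ℝ)) volume 0 1 :=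
      (cPX.inner cY').intervalIntegrable_of_Icc zero_le_one
    have hBC : (∫ t in (0:ℝ)..1,
          (inner ℝ (projQ n m (XcD n (γ t))) (projQ n m (YcD n (γ' t))) : ℝ)) =
        -(∫ t in (0:ℝ)..1, (inner ℝ (projQ n m (XcD n (γ' t))) (projQ n m (YcD n (γ t))) : ℝ)) := by
      have hadd := integral_add intB intC
      rw [hparts] at hadd
      linarith
    -- split the integrand
    have hsplit : (∫ t in (0:ℝ)..1, (inner ℝ (XcD n (γ t)) (YcD n (γ' t)) : ℝ)) =
        (∫ t in (0:ℝ)..1, (inner ℝ (projP n m (XcD n (γ t))) (YcD n (γ' t)) : ℝ)) +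
        (∫ t in (0:ℝ)..1, (inner ℝ (projQ n m (XcD n (γ t))) (projQ n m (YcD n (γ' t))) : ℝ)) := by
      rw [← integral_add intA intB]
      apply intervalIntegral.integral_congr
      intro t _
      exact inner_split n m (XcD n (γ t)) (YcD n (γ' t))
    have hA : |∫ t in (0:ℝ)..1, (inner ℝ (projP n m (XcD n (γ t))) (YcD n (γ' t)) : ℝ)| ≤ ℓ ^ 2 :=
      main_bound _ (cPX.inner cY') (fun t ht =>
        le_trans (abs_real_inner_le_norm _ _)
          (mul_le_mul (hsupP t ht) (YcD_norm_le n (γ' t)) (norm_nonneg _) hℓ0))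
    have hC : |∫ t in (0:ℝ)..1,
        (inner ℝ (projQ n m (XcD n (γ' t))) (projQ n m (YcD n (γ t))) : ℝ)| ≤ ℓ ^ 2 :=
      main_bound _ (cQX'.inner cQY) (fun t ht => by
        have h1 : |(inner ℝ (projQ n m (XcD n (γ' t))) (projQ n m (YcD n (γ t))) : ℝ)| ≤
            ‖projQ n m (XcD n (γ' t))‖ * ‖projQ n m (YcD n (γ t))‖ := abs_real_inner_le_norm _ _
        have h2 : ‖projQ n m (XcD n (γ' t))‖ * ‖projQ n m (YcD n (γ t))‖ ≤ ‖γ' t‖ * ℓ :=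
          mul_le_mul (le_trans (projQ_norm_le n m _) (XcD_norm_le n (γ' t))) (hsupQY t ht)
            (norm_nonneg _) (norm_nonneg _)
        rw [mul_comm] at h2
        linarith)
    rw [hsplit, hBC]
    have habs := abs_add_le
      (∫ t in (0:ℝ)..1, (inner ℝ (projP n m (XcD n (γ t))) (YcD n (γ' t)) : ℝ))
      (-(∫ t in (0:ℝ)..1, (inner ℝ (projQ n m (XcD n (γ' t))) (projQ n m (YcD n (γ t))) : ℝ)))
    rw [abs_neg] at habs
    linarith
  -- assemble the cases
  have hIeq : (∫ t in (0:ℝ)..1,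
      (inner ℝ ((WithLp.equiv 2 _ (γ t)).1) ((WithLp.equiv 2 _ (γ' t)).2) : ℝ)) =
      ∫ t in (0:ℝ)..1, (inner ℝ (XcD n (γ t)) (YcD n (γ' t)) : ℝ) :=
    intervalIntegral.integral_congr (fun t _ => rfl)
  rw [hIeq]
  rcases h0 with h0 | h0
  · exact caseA (Or.inl (h0))
  · rcases h1 with h1 | h1
    · exact caseA (Or.inr (h1))
    · exact caseB h0 h1
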